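/- arXiv:math/0608042 — 2 statements merged into one kernel-verified Lean document; each statement's English description precedes it below -/
import Mathlib

section
/- Let α > 1 be a real number and β ∈ ℝ. An integer m has the form m = ⌊α n + β⌋ for some integer n if and only if 0 < {α^{-1}(m − β + 1)} ≤ α^{-1}. Moreover, when this holds, the integer n with m = ⌊α n + β⌋ is uniquely determined by m. -/
/-- For `α > 1`, an integer `m` has the form `m = ⌊α n + β⌋` for some integer `n` if and
only if `0 < {α⁻¹(m − β + 1)} ≤ α⁻¹`; moreover, such `n` is uniquely determined by `m`. -/
theorem beatty_values (α β : ℝ) (hα : 1 < α) (m : ℤ) :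
    ((∃ n : ℤ, m = ⌊α * n + β⌋) ↔
      (0 < Int.fract (α⁻¹ * (m - β + 1)) ∧ Int.fract (α⁻¹ * (m - β + 1)) ≤ α⁻¹)) ∧
    (∀ n₁ n₂ : ℤ, m = ⌊α * n₁ + β⌋ → m = ⌊α * n₂ + β⌋ → n₁ = n₂) := by
  have hα0 : (0:ℝ) < α := lt_trans one_pos hα
  have hαne : α ≠ 0 := ne_of_gt hα0
  have hinv0 : (0:ℝ) < α⁻¹ := inv_pos.mpr hα0
  have hinv1 : α⁻¹ < 1 := inv_lt_one_of_one_lt₀ hα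
  set x : ℝ := α⁻¹ * (m - β + 1) with hx
  have hαx : α * x = (m:ℝ) - β + 1 := by
    rw [hx]; field_simp
  constructor
  · constructor
    · rintro ⟨n, hn⟩
      have h := (Int.floor_eq_iff (R := ℝ)).mp hn.symm
      obtain ⟨h1, h2⟩ := h
      -- m ≤ αn + β < m+1
      have hn_lt : (n:ℝ) < x := by
        rw [hx]
        rw [lt_inv_mul_iff₀ hα0]
        push_cast at h2 ⊢
        linarith
      have hn_ge : x - α⁻¹ ≤ (n:ℝ) := by
        have : (m:ℝ) - β ≤ α * n := by linarith
        have h3 : α⁻¹ * ((m:ℝ) - β) ≤ n := by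
          rw [inv_mul_le_iff₀ hα0]
          linarith [this]
        have : x - α⁻¹ = α⁻¹ * ((m:ℝ) - β) := by rw [hx]; ring
        linarith
      have hfl : ⌊x⌋ = n := by
        apply Int.floor_eq_iff.mpr
        constructor
        · linarith
        · push_cast; linarith
      rw [Int.fract, hfl]
      constructor <;> linarith
    · rintro ⟨h1, h2⟩
      refine ⟨⌊x⌋, ?_⟩
      have hf : Int.fract x = x - ⌊x⌋ := rfl
      have hlt : (⌊x⌋:ℝ) < x := by rw [hf] at h1; linarith
      have hge : x - α⁻¹ ≤ (⌊x⌋:ℝ) := by rw [hf] at h2; linarith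
      symm
      apply Int.floor_eq_iff.mpr
      have e1 : α * (x - α⁻¹) ≤ α * ⌊x⌋ := by
        apply mul_le_mul_of_nonneg_left hge (le_of_lt hα0)
      have e2 : α * (⌊x⌋:ℝ) < α * x := by
        apply mul_lt_mul_of_pos_left hlt hα0
      rw [mul_sub, hαx, mul_inv_cancel₀ hαne] at e1
      rw [hαx] at e2
      constructor
      · push_cast; linarith
      · push_cast; linarith
  · intro n₁ n₂ h1 h2
    have g1 := (Int.floor_eq_iff (R := ℝ)).mp h1.symm
    have g2 := (Int.floor_eq_iff (R := ℝ)).mp h2.symm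
    obtain ⟨a1, a2⟩ := g1
    obtain ⟨b1, b2⟩ := g2
    push_cast at a2 b2
    have hd : |α * ((n₁:ℝ) - n₂)| < 1 := by
      rw [abs_lt]; constructor <;> nlinarith
    have hd2 : |(n₁:ℝ) - n₂| < 1 := by
      rw [abs_mul, abs_of_pos hα0] at hd
      nlinarith [abs_nonneg ((n₁:ℝ) - n₂)]
    have : |n₁ - n₂| < 1 := by exact_mod_cast hd2
    rwa [Int.abs_lt_one_iff, sub_eq_zero] at this
end

section
/- Let α > 1 be irrational, β ∈ ℝ, k a positive integer, χ a Dirichlet character modulo k, and N a positive integer. Put γ = α^{-1}, δ = α^{-1}(1 − β), M_0 = ⌊α + β − 1⌋, and M = ⌊α N + β⌋. Then ∑_{n=1}^{N} χ(⌊α n + β⌋) = ∑_{M_0 < m ≤ M, 0 < {γ m + δ} ≤ γ} χ(m), i.e., the character sum along the Beatty sequence equals the sum of χ(m) over those integers m in (M_0, M] whose fractional part {γ m + δ} lies in the interval (0, γ]. -/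
set_option maxHeartbeats 1000000 in
/-- For irrational `α > 1`, with `γ = α⁻¹`, `δ = α⁻¹(1 − β)`, `M₀ = ⌊α + β − 1⌋` and
`M = ⌊α N + β⌋`, the Beatty character sum `∑_{n ≤ N} χ(⌊α n + β⌋)` equals the sum of
`χ(m)` over the integers `M₀ < m ≤ M` with `0 < {γ m + δ} ≤ γ`. -/
theorem beatty_char_sum_eq_filtered_sum (α β : ℝ) (hα1 : 1 < α) (hα : Irrational α)
    (k : ℕ) (hk : 0 < k) (χ : DirichletCharacter ℂ k) (N : ℕ) (hN : 0 < N) :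
    ∑ n ∈ Finset.Icc 1 N, χ ((⌊α * n + β⌋ : ℤ) : ZMod k) =
      ∑ m ∈ (Finset.Ioc ⌊α + β - 1⌋ ⌊α * N + β⌋).filter
          (fun m : ℤ => 0 < Int.fract (α⁻¹ * (m : ℝ) + α⁻¹ * (1 - β)) ∧
            Int.fract (α⁻¹ * (m : ℝ) + α⁻¹ * (1 - β)) ≤ α⁻¹),
        χ ((m : ℤ) : ZMod k) := by
  have hα0 : (0:ℝ) < α := lt_trans one_pos hα1
  have hγ0 : (0:ℝ) < α⁻¹ := inv_pos.mpr hα0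
  have hγ1 : α⁻¹ < 1 := inv_lt_one_of_one_lt₀ hα1
  have hαγ : α * α⁻¹ = 1 := mul_inv_cancel₀ (ne_of_gt hα0)
  -- the inverse map recovers `n`
  have key : ∀ n : ℕ, ⌊α⁻¹ * ((⌊α * n + β⌋ : ℤ) : ℝ) + α⁻¹ * (1 - β)⌋ = (n : ℤ) := by
    intro n
    set m : ℤ := ⌊α * n + β⌋ with hm
    have h1 : (m : ℝ) ≤ α * n + β := Int.floor_le _
    have h2 : α * n + β < m + 1 := Int.lt_floor_add_one _
    rw [Int.floor_eq_iff]
    constructor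
    · push_cast
      nlinarith [mul_le_mul_of_nonneg_left h1 (le_of_lt hγ0)]
    · push_cast
      nlinarith [mul_lt_mul_of_pos_left h2 hγ0]
  refine Finset.sum_nbij' (fun n : ℕ => ⌊α * n + β⌋)
    (fun m : ℤ => (⌊α⁻¹ * (m : ℝ) + α⁻¹ * (1 - β)⌋).toNat) ?_ ?_ ?_ ?_ ?_
  · -- maps into the filtered set
    intro n hn
    simp only [Finset.mem_Icc] at hn
    simp only [Finset.mem_filter, Finset.mem_Ioc]
    set m : ℤ := ⌊α * n + β⌋ with hm
    have h1 : (m : ℝ) ≤ α * n + β := Int.floor_le _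
    have h2 : α * n + β < m + 1 := Int.lt_floor_add_one _
    have hn1 : (1:ℝ) ≤ (n:ℝ) := by exact_mod_cast hn.1
    have hnN : (n:ℝ) ≤ (N:ℝ) := by exact_mod_cast hn.2
    refine ⟨⟨?_, ?_⟩, ?_, ?_⟩
    · have hfl : ⌊α + β - 1⌋ = ⌊α + β⌋ - 1 := by
        exact_mod_cast Int.floor_sub_intCast (α + β) 1
      have : ⌊α + β⌋ ≤ m := Int.floor_le_floor (by nlinarith)
      omega
    · exact Int.floor_le_floor (by nlinarith)
    · have hk := key n
      rw [Int.fract, hk]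
      push_cast
      nlinarith [mul_lt_mul_of_pos_left h2 hγ0]
    · have hk := key n
      rw [Int.fract, hk]
      push_cast
      nlinarith [mul_le_mul_of_nonneg_left h1 (le_of_lt hγ0)]
  · -- inverse maps into `Icc 1 N`
    intro m hm
    simp only [Finset.mem_filter, Finset.mem_Ioc] at hm
    obtain ⟨⟨hm1, hm2⟩, hf1, hf2⟩ := hm
    simp only [Finset.mem_Icc]
    set y : ℝ := α⁻¹ * (m : ℝ) + α⁻¹ * (1 - β) with hy
    set n : ℤ := ⌊y⌋ with hn
    have hay : α * y = (m : ℝ) + 1 - β := by rw [hy]; field_simp; ring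
    have hfr : Int.fract y = y - n := by rw [Int.fract, hn]
    have hlt : (n : ℝ) < y := by rw [hfr] at hf1; linarith
    have hge : y - α⁻¹ ≤ (n : ℝ) := by rw [hfr] at hf2; linarith
    have hmr : (α + β - 1 : ℝ) < m := by
      have h1 : (⌊α + β - 1⌋ : ℝ) + 1 ≤ (m : ℝ) := by exact_mod_cast Int.add_one_le_of_lt hm1
      have h2 : α + β - 1 - 1 < (⌊α + β - 1⌋ : ℝ) := by linarith [Int.lt_floor_add_one (α + β - 1)]
      linarith
    have hy1 : (1:ℝ) < y := by
      have : α * y > α * 1 := by rw [hay]; nlinarith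
      nlinarith
    have hn1 : 1 ≤ n := Int.le_floor.mpr (by exact_mod_cast le_of_lt hy1)
    have hnN : n ≤ (N : ℤ) := by
      have hmM : (m : ℝ) ≤ α * N + β := by
        have : (m : ℝ) ≤ (⌊α * N + β⌋ : ℝ) := by exact_mod_cast hm2
        linarith [Int.floor_le (α * N + β)]
      have h3 : α * (n : ℝ) < (m : ℝ) + 1 - β := by
        nlinarith [mul_lt_mul_of_pos_left hlt hα0]
      have h4 : (n : ℝ) < (N : ℝ) + 1 := by nlinarith
      exact_mod_cast Int.lt_add_one_iff.mp (by exact_mod_cast h4)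
    omega
  · -- left inverse
    intro n hn
    show (⌊α⁻¹ * ((⌊α * n + β⌋ : ℤ) : ℝ) + α⁻¹ * (1 - β)⌋).toNat = n
    rw [key n]
    simp
  · -- right inverse
    intro m hm
    simp only [Finset.mem_filter, Finset.mem_Ioc] at hm
    obtain ⟨⟨hm1, hm2⟩, hf1, hf2⟩ := hm
    show ⌊α * (((⌊α⁻¹ * (m : ℝ) + α⁻¹ * (1 - β)⌋).toNat : ℕ) : ℝ) + β⌋ = m
    set y : ℝ := α⁻¹ * (m : ℝ) + α⁻¹ * (1 - β) with hy
    set n : ℤ := ⌊y⌋ with hn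
    have hay : α * y = (m : ℝ) + 1 - β := by rw [hy]; field_simp; ring
    have hfr : Int.fract y = y - n := by rw [Int.fract, hn]
    have hlt : (n : ℝ) < y := by rw [hfr] at hf1; linarith
    have hge : y - α⁻¹ ≤ (n : ℝ) := by rw [hfr] at hf2; linarith
    have hmr : (α + β - 1 : ℝ) < m := by
      have h1 : (⌊α + β - 1⌋ : ℝ) + 1 ≤ (m : ℝ) := by exact_mod_cast Int.add_one_le_of_lt hm1
      have h2 : α + β - 1 - 1 < (⌊α + β - 1⌋ : ℝ) := by linarith [Int.lt_floor_add_one (α + β - 1)]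
      linarith
    have hy1 : (1:ℝ) < y := by
      have : α * y > α * 1 := by rw [hay]; nlinarith
      nlinarith
    have hn1 : 1 ≤ n := Int.le_floor.mpr (by exact_mod_cast le_of_lt hy1)
    have hcast : ((n.toNat : ℕ) : ℝ) = (n : ℝ) := by
      norm_cast
      omega
    rw [hcast, Int.floor_eq_iff]
    constructor
    · nlinarith [mul_le_mul_of_nonneg_left hge (le_of_lt hα0), hay]
    · push_cast
      nlinarith [mul_lt_mul_of_pos_left hlt hα0, hay]
  · intro n hn
    rfl
end
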